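/- Let E be a (Z,ψ,L)-Schwarzenberger bundle on X, so S = H⁰(L), T = H⁰(L⊗ψ*U^∨), and φ: T* → S*⊗H⁰(F₀^∨) is dual to the multiplication map. Then for each point z ∈ Z, the pair (L_z*, (ψ*U)_z), consisting of the rk(L)-dimensional subspace L_z* ⊆ H⁰(L)* and the f₀-dimensional subspace (ψ*U)_z ⊆ H⁰(F₀^∨), satisfies L_z*⊗(ψ*U)_z ⊆ im φ; i.e., each point of Z gives a jumping pair of E. -/
import Mathlib


/-!
Statement 8 (Schwarzenberger bundles have jumping pairs at every point of `Z`).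

Let `E` be a `(Z,ψ,L)`-Schwarzenberger bundle on `X`, so `S = H⁰(L)`,
`T = H⁰(L ⊗ ψ*U^∨)` and `φ : T* → S* ⊗ H⁰(F₀^∨)` is dual to the multiplication map.
Then for each `z ∈ Z` the pair `(L_z*, (ψ*U)_z)`, consisting of the `rk L`-dimensional
subspace `L_z* ⊆ H⁰(L)*` and the `f₀`-dimensional subspace `(ψ*U)_z ⊆ H⁰(F₀^∨)`,
satisfies `L_z* ⊗ (ψ*U)_z ⊆ im φ`: each point of `Z` gives a jumping pair of `E`.

Formalization: `H = H⁰(F₀^∨)`, `H⁰(ψ*U^∨) ≅ H⁰(F₀^∨)* = H*`; `ψ z = (ψ*U)_z` is an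
`f₀`-dimensional subspace of `H`; the fibre of `L ⊗ ψ*U^∨` at `z` is presented in
Hom-form as `ψ z →ₗ Lf z`, with evaluation `evT z` compatible with the multiplication
map `mult` (`hcompat`).  `S* ⊗ H` is presented in Hom-form as `S →ₗ H`, under which an
elementary tensor `a ⊗ b` (`a ∈ S*`, `b ∈ H`) is `a.smulRight b`; `φ` is dual to `mult`
(`hφ`); `L_z* ⊆ S*` is the image of the dual of the evaluation `evL z : H⁰(L) ↠ L_z`.
Conclusion: `L_z*` has dimension `rk L`, `(ψ*U)_z` has dimension `f₀`, and
`L_z* ⊗ (ψ*U)_z ⊆ im φ`.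
-/

open Module LinearMap

theorem statement8
    (k : Type*) [Field k] [IsAlgClosed k] [CharZero k]
    (Z : Type*) (f₀ a : ℕ)
    (H : Type*) [AddCommGroup H] [Module k H] [FiniteDimensional k H]
    -- S = H⁰(L) and T = H⁰(L ⊗ ψ*U^∨)
    (S : Type*) [AddCommGroup S] [Module k S] [FiniteDimensional k S]
    (T : Type*) [AddCommGroup T] [Module k T] [FiniteDimensional k T]
    -- the subspaces (ψ*U)_z ⊆ H⁰(F₀^∨), of dimension f₀
    (ψ : Z → Submodule k H) (hψ : ∀ z, Module.finrank k (ψ z) = f₀)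
    -- the fibres of L (of rank a) with surjective evaluation maps
    (Lf : Z → Type*) [∀ z, AddCommGroup (Lf z)] [∀ z, Module k (Lf z)]
    [∀ z, FiniteDimensional k (Lf z)]
    (hLf : ∀ z, Module.finrank k (Lf z) = a)
    (evL : ∀ z, S →ₗ[k] Lf z) (hevL : ∀ z, Function.Surjective (evL z))
    -- the multiplication map H⁰(L) ⊗ H⁰(ψ*U^∨) → H⁰(L ⊗ ψ*U^∨), with H⁰(ψ*U^∨) ≅ H*
    (mult : S →ₗ[k] (Dual k H →ₗ[k] T))
    -- evaluation of H⁰(L ⊗ ψ*U^∨) at z (fibre in Hom-form), compatible with mult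
    (evT : ∀ z, T →ₗ[k] ((ψ z) →ₗ[k] Lf z))
    (hcompat : ∀ z (σ : S) (ξ : Dual k H) (w : ψ z),
      evT z (mult σ ξ) w = ξ (w : H) • evL z σ)
    -- φ : T* → S* ⊗ H⁰(F₀^∨) (Hom-form) is dual to the multiplication map
    (φ : Dual k T →ₗ[k] (S →ₗ[k] H))
    (hφ : ∀ (τ : Dual k T) (σ : S) (ξ : Dual k H), ξ (φ τ σ) = τ (mult σ ξ)) :
    ∀ z : Z,
      Module.finrank k (LinearMap.range (evL z).dualMap) = a ∧
      Module.finrank k (ψ z) = f₀ ∧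
      ∀ aϝ ∈ LinearMap.range (evL z).dualMap, ∀ b ∈ ψ z,
        aϝ.smulRight b ∈ LinearMap.range φ := by
  intro z
  refine ⟨?_, hψ z, ?_⟩
  · have hinj : Function.Injective (evL z).dualMap :=
      LinearMap.dualMap_injective_of_surjective (hevL z)
    rw [LinearMap.finrank_range_of_inj hinj, Subspace.dual_finrank_eq, hLf z]
  · rintro aϝ ⟨l, rfl⟩ b hb
    refine ⟨l ∘ₗ LinearMap.applyₗ (⟨b, hb⟩ : ψ z) ∘ₗ evT z, ?_⟩
    ext σ
    rw [← sub_eq_zero, ← Module.forall_dual_apply_eq_zero_iff k]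
    intro ξ
    rw [map_sub, hφ, sub_eq_zero]
    simp only [LinearMap.comp_apply, LinearMap.smulRight_apply, LinearMap.dualMap_apply,
      map_smul, smul_eq_mul]
    rw [show (LinearMap.applyₗ (⟨b, hb⟩ : ψ z)) ((evT z) ((mult σ) ξ))
        = (evT z) ((mult σ) ξ) ⟨b, hb⟩ from rfl, hcompat, map_smul, smul_eq_mul, mul_comm]
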